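/- The expected total loss of the counting estimator trained on i iid fair coin flips satisfies the exact asymptotic √(2πi) · E_i → 1 as i → ∞; that is, the limit of √(2πi) · E_i over all positive integers i equals 1, so E_i ~ (2πi)^(−1/2). -/

import Mathlib

open Finset Real Filter

lemma keyA (n k : ℕ) (h1 : 1 ≤ k) (h2 : k ≤ n) :
    (n.choose k : ℤ) * (2*(k:ℤ) - n) =
      n * (((n-1).choose (k-1) : ℤ) - ((n-1).choose k : ℤ)) := by
  obtain ⟨m, rfl⟩ := Nat.exists_eq_succ_of_ne_zero (show n ≠ 0 by omega)
  obtain ⟨j, rfl⟩ := Nat.exists_eq_succ_of_ne_zero (show k ≠ 0 by omega)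
  simp only [Nat.succ_sub_one]
  have ha : (m+1) * m.choose j = (m+1).choose (j+1) * (j+1) := Nat.add_one_mul_choose_eq m j
  have hb : (m+1) * m.choose (j+1) = (m+1).choose (j+1) * (m - j) := by
    rcases Nat.eq_or_lt_of_le h2 with heq | hlt
    · have : j = m := by omega
      subst this
      rw [Nat.choose_eq_zero_of_lt (by omega)]
      simp
    · have h1 := Nat.add_one_mul_choose_eq m (j+1)
      have h2' := Nat.choose_succ_right_eq (m+1) (j+1)
      rw [h1, h2']
      congr 1
      omega
  have ha' : ((m:ℤ)+1) * (m.choose j : ℤ) = ((m+1).choose (j+1) : ℤ) * ((j:ℤ)+1) := by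
    exact_mod_cast ha
  have hb' : ((m:ℤ)+1) * (m.choose (j+1) : ℤ) = ((m+1).choose (j+1) : ℤ) * ((m:ℤ) - j) := by
    have := congrArg (Nat.cast : ℕ → ℤ) hb
    push_cast [Nat.cast_sub (show j ≤ m by omega)] at this
    linarith [this]
  push_cast
  linear_combination hb' - ha'

lemma sum_abs (n : ℕ) (hn : 1 ≤ n) :
    ∑ k ∈ Finset.range (n+1), (n.choose k : ℤ) * |2*(k:ℤ) - n| =
      2 * n * ((n-1).choose ((n-1)/2) : ℤ) := by
  set m := (n+1)/2 with hm
  have hm1 : 1 ≤ m := by omega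
  have hmn : m ≤ n := by omega
  rw [← Finset.sum_range_add_sum_Ico _ (show m ≤ n+1 by omega)]
  have h2 : ∑ k ∈ Finset.Ico m (n+1), (n.choose k : ℤ) * |2*(k:ℤ) - n|
      = n * ((n-1).choose (m-1) : ℤ) := by
    have step : ∀ k ∈ Finset.Ico m (n+1), (n.choose k : ℤ) * |2*(k:ℤ) - n|
        = (fun t => (n:ℤ) * ((n-1).choose (m-1+t) : ℤ)) (k - m)
          - (fun t => (n:ℤ) * ((n-1).choose (m-1+t) : ℤ)) (k - m + 1) := by
      intro k hk
      rw [Finset.mem_Ico] at hk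
      have hk1 : 1 ≤ k := by omega
      have hk2 : k ≤ n := by omega
      have habs : |2*(k:ℤ) - n| = 2*(k:ℤ) - n := by
        apply abs_of_nonneg
        have : n ≤ 2*k := by omega
        omega
      rw [habs, keyA n k hk1 hk2]
      simp only
      rw [show m-1+(k-m) = k-1 by omega, show m-1+(k-m+1) = k by omega]
      ring
    rw [Finset.sum_congr rfl step]
    rw [Finset.sum_Ico_eq_sum_range]
    simp only [Nat.add_sub_cancel_left]
    rw [Finset.sum_range_sub']
    rw [show m-1+(n+1-m) = n by omega, show m-1+0 = m-1 by omega]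
    rw [Nat.choose_eq_zero_of_lt (show n-1 < n by omega)]
    ring
  -- part 1 : range m
  have h1 : ∑ k ∈ Finset.range m, (n.choose k : ℤ) * |2*(k:ℤ) - n|
      = n * ((n-1).choose (n-m) : ℤ) := by
    have refl1 : ∀ k ∈ Finset.range m, (n.choose k : ℤ) * |2*(k:ℤ) - n|
        = (fun j => (n:ℤ) * ((n-1).choose (n-m+j) : ℤ)
            - (n:ℤ) * ((n-1).choose (n-m+j+1) : ℤ)) (m-1-k) := by
      intro k hk
      rw [Finset.mem_range] at hk
      have hk2 : 2*k ≤ n := by omega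
      have habs : |2*(k:ℤ) - n| = (n:ℤ) - 2*k := by
        rw [abs_of_nonpos (by omega)]; ring
      rw [habs]
      simp only
      set j := m - 1 - k with hj
      have hkj : k = m - 1 - j := by omega
      have e1 : n.choose k = n.choose (n-m+j+1) := by
        rw [show n-m+j+1 = n - k by omega, Nat.choose_symm (by omega)]
      have key := keyA n (n-m+j+1) (by omega) (by omega)
      rw [show n-m+j+1-1 = n-m+j by omega] at key
      rw [e1]
      have hcast : ((n-m+j+1 : ℕ) : ℤ) = (n:ℤ) - k := by push_cast; omega
      rw [hcast] at key
      linear_combination key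
    rw [Finset.sum_congr rfl refl1,
      Finset.sum_range_reflect (fun j => (n:ℤ) * ((n-1).choose (n-m+j) : ℤ)
        - (n:ℤ) * ((n-1).choose (n-m+j+1) : ℤ)) m]
    simp only [Nat.add_assoc]
    rw [Finset.sum_range_sub' (fun t => (n:ℤ) * ((n-1).choose (n-m+t) : ℤ)) m]
    rw [show n-m+m = n by omega, show n-m+0 = n-m by omega]
    rw [Nat.choose_eq_zero_of_lt (show n-1 < n by omega)]
    ring
  rw [h1, h2]
  have hsymm : (n-1).choose (n-m) = (n-1).choose (m-1) := by
    rw [show n-m = (n-1) - (m-1) by omega, Nat.choose_symm (by omega)]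
  rw [hsymm, show m-1 = (n-1)/2 by omega]
  ring

/-- Expected total loss of the counting estimator trained on `i` iid fair coin flips. -/
noncomputable def countingLoss (i : ℕ) : ℝ :=
  2 ^ (-(i : ℝ)) * ∑ k ∈ Finset.range (i + 1), (Nat.choose i k : ℝ) * |(k : ℝ) / i - 1 / 2|

lemma countingLoss_eq (i : ℕ) (hi : 1 ≤ i) :
    countingLoss i = ((i-1).choose ((i-1)/2) : ℝ) / 2^i := by
  have hi0 : (0:ℝ) < i := by exact_mod_cast hi
  unfold countingLoss
  have habs : ∀ k ∈ Finset.range (i+1), (i.choose k : ℝ) * |(k:ℝ)/i - 1/2|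
      = (i.choose k : ℝ) * |2*(k:ℝ) - i| / (2*i) := by
    intro k _
    rw [show (k:ℝ)/i - 1/2 = (2*(k:ℝ) - i)/(2*i) by field_simp]
    rw [abs_div, show |2*(i:ℝ)| = 2*i from abs_of_pos (by linarith)]
    ring
  rw [Finset.sum_congr rfl habs, ← Finset.sum_div]
  have hsum : ∑ k ∈ Finset.range (i+1), (i.choose k : ℝ) * |2*(k:ℝ) - i|
      = 2 * i * ((i-1).choose ((i-1)/2) : ℝ) := by
    have h := sum_abs i hi
    have := congrArg (Int.cast : ℤ → ℝ) h
    push_cast at this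
    convert this using 2
  rw [hsum]
  rw [Real.rpow_neg (by norm_num), Real.rpow_natCast]
  field_simp

lemma stirling_eq (n : ℕ) (hn : 1 ≤ n) :
    Real.sqrt π * (Stirling.stirlingSeq (2*n) / (Stirling.stirlingSeq n)^2)
      = Real.sqrt (π * n) * (Nat.centralBinom n : ℝ) / 4^n := by
  have hn0 : (0:ℝ) < n := by exact_mod_cast hn
  have hfac : ((2*n).factorial : ℝ) = (Nat.centralBinom n : ℝ) * n.factorial * n.factorial := by
    have := Nat.choose_mul_factorial_mul_factorial (show n ≤ 2*n by omega)
    rw [show 2*n - n = n by omega] at this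
    rw [Nat.centralBinom]
    exact_mod_cast this.symm
  unfold Stirling.stirlingSeq
  have h4 : ((2*(n:ℕ):ℕ):ℝ) = 2*(n:ℝ) := by push_cast; ring
  rw [h4]
  have hsqrt : Real.sqrt (2*(2*(n:ℝ))) = 2 * Real.sqrt n := by
    rw [show 2*(2*(n:ℝ)) = 2^2 * n by ring, Real.sqrt_mul (by positivity),
      Real.sqrt_sq (by norm_num)]
  have hpow : (2*(n:ℝ)/Real.exp 1)^(2*n) = 4^n * ((n:ℝ)/Real.exp 1)^(2*n) := by
    rw [show 2*(n:ℝ)/Real.exp 1 = 2 * ((n:ℝ)/Real.exp 1) by ring, mul_pow,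
      show (2:ℝ)^(2*n) = 4^n by rw [pow_mul]; norm_num]
  rw [hsqrt, hpow, hfac]
  have hsqpi : Real.sqrt (π * n) = Real.sqrt π * Real.sqrt n := Real.sqrt_mul pi_pos.le n
  rw [hsqpi]
  have h1 : Real.sqrt (n:ℝ) ≠ 0 := by positivity
  have h2 : ((n:ℝ)/Real.exp 1)^(2*n) ≠ 0 := by positivity
  have h3 : (n.factorial : ℝ) ≠ 0 := by positivity
  have h5 : Real.sqrt (2*(n:ℝ)) ≠ 0 := by positivity
  have hss : Real.sqrt (n:ℝ) * Real.sqrt (n:ℝ) = (n:ℝ) := Real.mul_self_sqrt hn0.le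
  field_simp
  ring_nf
  rw [Real.sq_sqrt (by positivity : (0:ℝ) ≤ (n:ℝ)*2),
    Real.sq_sqrt (by positivity : (0:ℝ) ≤ (n:ℝ))]
  ring

lemma cb_lim : Tendsto (fun n : ℕ => Real.sqrt (π * n) * (Nat.centralBinom n : ℝ) / 4^n)
    atTop (nhds 1) := by
  have h2n : Tendsto (fun n : ℕ => 2*n) atTop atTop :=
    tendsto_atTop_atTop.2 fun b => ⟨b, fun a ha => by omega⟩
  have hA : Tendsto (fun n : ℕ => Stirling.stirlingSeq (2*n)) atTop (nhds (Real.sqrt π)) :=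
    Stirling.tendsto_stirlingSeq_sqrt_pi.comp h2n
  have hB : Tendsto (fun n : ℕ => (Stirling.stirlingSeq n)^2) atTop (nhds (Real.sqrt π ^ 2)) :=
    Stirling.tendsto_stirlingSeq_sqrt_pi.pow 2
  have hne : Real.sqrt π ^ 2 ≠ 0 := by
    rw [Real.sq_sqrt pi_pos.le]; exact pi_pos.ne'
  have hq := (tendsto_const_nhds (x := Real.sqrt π)).mul (hA.div hB hne)
  have hval : Real.sqrt π * (Real.sqrt π / Real.sqrt π ^ 2) = 1 := by
    rw [Real.sq_sqrt pi_pos.le]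
    have h := Real.mul_self_sqrt pi_pos.le
    field_simp
    rw [Real.sq_sqrt pi_pos.le]
  rw [hval] at hq
  apply hq.congr'
  filter_upwards [eventually_ge_atTop 1] with n hn
  exact stirling_eq n hn

lemma cb_eq (n : ℕ) (hn : 1 ≤ n) : Nat.centralBinom n = 2 * (2*n-1).choose (n-1) := by
  obtain ⟨m, rfl⟩ := Nat.exists_eq_succ_of_ne_zero (show n ≠ 0 by omega)
  rw [Nat.centralBinom, show 2*(m+1)-1 = 2*m+1 by omega, show m+1-1 = m by omega,
    show 2*(m+1) = (2*m+1)+1 by ring]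
  rw [Nat.choose_succ_succ, Nat.choose_symm_half]
  omega

lemma parity_lemma {f : ℕ → ℝ} {l : ℝ}
    (he : Tendsto (fun n => f (2*n)) atTop (nhds l))
    (ho : Tendsto (fun n => f (2*n+1)) atTop (nhds l)) :
    Tendsto f atTop (nhds l) := by
  rw [Metric.tendsto_atTop] at he ho ⊢
  intro ε hε
  obtain ⟨N1, h1⟩ := he ε hε
  obtain ⟨N2, h2⟩ := ho ε hε
  refine ⟨2*N1 + 2*N2 + 2, fun n hn => ?_⟩
  rcases Nat.even_or_odd n with ⟨k, hk⟩ | ⟨k, hk⟩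
  · rw [show n = 2*k by omega]
    exact h1 k (by omega)
  · rw [show n = 2*k+1 by omega]
    exact h2 k (by omega)

lemma keyE (n : ℕ) (hn : 1 ≤ n) :
    Real.sqrt (2*π*((2*n : ℕ):ℝ)) * countingLoss (2*n)
      = Real.sqrt (π*n) * (Nat.centralBinom n : ℝ) / 4^n := by
  rw [countingLoss_eq (2*n) (by omega), show (2*n-1)/2 = n-1 by omega]
  have hc : ((2*n-1).choose (n-1) : ℝ) = (Nat.centralBinom n : ℝ)/2 := by
    rw [cb_eq n hn]; push_cast; ring
  rw [hc, show ((2:ℝ))^(2*n) = 4^n by rw [pow_mul]; norm_num]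
  rw [show (2*π*((2*n : ℕ):ℝ)) = 2^2*(π*n) by push_cast; ring,
    Real.sqrt_mul (by norm_num : (0:ℝ) ≤ 2^2), Real.sqrt_sq (by norm_num : (0:ℝ) ≤ 2)]
  have h4 : (4:ℝ)^n ≠ 0 := by positivity
  field_simp

lemma keyO (n : ℕ) (hn : 1 ≤ n) :
    Real.sqrt (2*π*((2*n+1 : ℕ):ℝ)) * countingLoss (2*n+1)
      = (Real.sqrt (π*n) * (Nat.centralBinom n : ℝ) / 4^n)
        * Real.sqrt ((2*(n:ℝ)+1)/(2*n)) := by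
  have hn0 : (0:ℝ) < n := by exact_mod_cast hn
  rw [countingLoss_eq (2*n+1) (by omega), show (2*n+1-1)/2 = n by omega,
      show 2*n+1-1 = 2*n by omega]
  have hcb : ((2*n).choose n : ℝ) = (Nat.centralBinom n : ℝ) := by
    rw [Nat.centralBinom]
  rw [hcb]
  rw [show (2*π*((2*n+1 : ℕ):ℝ)) = (π*n*((2*(n:ℝ)+1)/(2*n)))*2^2 by
    push_cast; field_simp]
  rw [Real.sqrt_mul (by positivity), Real.sqrt_sq (by norm_num : (0:ℝ) ≤ 2),
      Real.sqrt_mul (by positivity : (0:ℝ) ≤ π*n)]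
  rw [show ((2:ℝ))^(2*n+1) = 2*4^n by rw [pow_succ, pow_mul]; norm_num; ring]
  have h4 : (4:ℝ)^n ≠ 0 := by positivity
  field_simp

lemma haux : Tendsto (fun n : ℕ => Real.sqrt ((2*(n:ℝ)+1)/(2*n))) atTop (nhds 1) := by
  have h0 : Tendsto (fun n : ℕ => (2*(n:ℝ)+1)/(2*n)) atTop (nhds 1) := by
    have h2n : Tendsto (fun n : ℕ => 2*n) atTop atTop :=
      tendsto_atTop_atTop.2 fun b => ⟨b, fun a ha => by omega⟩
    have h1 : Tendsto (fun n : ℕ => 1 + 1/((2*n : ℕ):ℝ)) atTop (nhds (1+0)) :=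
      tendsto_const_nhds.add (tendsto_one_div_atTop_nhds_zero_nat.comp h2n)
    rw [add_zero] at h1
    apply h1.congr'
    filter_upwards [eventually_ge_atTop 1] with n hn
    have hn0 : (0:ℝ) < n := by exact_mod_cast hn
    push_cast
    field_simp
  have := (Real.continuous_sqrt.tendsto 1).comp h0
  rw [Real.sqrt_one] at this
  exact this

theorem counting_loss_asymptotic :
    Tendsto (fun i : ℕ => Real.sqrt (2 * Real.pi * i) * countingLoss i) atTop (nhds 1) := by
  apply parity_lemma
  · apply cb_lim.congr'
    filter_upwards [eventually_ge_atTop 1] with n hn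
    exact (keyE n hn).symm
  · have hmul := cb_lim.mul haux
    rw [mul_one] at hmul
    apply hmul.congr'
    filter_upwards [eventually_ge_atTop 1] with n hn
    exact (keyO n hn).symm
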